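/- Let n ≥ 2, c ∈ ℂ^×, and let x = (x_2,…,x_{2n−1}) be nonzero complex numbers such that all denominators occurring below are nonzero. Then γ_1(e_0^c(x)) = c^{−1}·γ_1(x), γ_n(e_0^c(x)) = c^{−1}·γ_n(x), and γ_i(e_0^c(x)) = γ_i(x) for 2 ≤ i ≤ n−1. -/

import Mathlib

noncomputable section

/-- `Sf n x k = ∑_{j=2}^{k} x_j / x_{n+j-1}` (so `Sf n x 1 = 0`, `S(x) = Sf n x n`). -/
def Sf (n : ℕ) (x : ℕ → ℂ) (k : ℕ) : ℂ :=
  ∑ j ∈ Finset.Icc 2 k, x j / x (n + j - 1)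

/-- `Tf n x k = ∑_{j=k+1}^{n} x_j / x_{n+j-1}` (so `Tf n x n = 0`). -/
def Tf (n : ℕ) (x : ℕ → ℂ) (k : ℕ) : ℂ :=
  ∑ j ∈ Finset.Icc (k + 1) n, x j / x (n + j - 1)

/-- The rational map `e_0^c`. -/
def e0M (n : ℕ) (c : ℂ) (x : ℕ → ℂ) (k : ℕ) : ℂ :=
  if k ≤ n - 1 then x k * Sf n x n / (c * Sf n x k + Tf n x k)
  else if k ≤ n + 1 then x k / c
  else x k * (c * Sf n x (k - n) + Tf n x (k - n)) / (c * Sf n x n)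

/-- The functions `γ_i` for `1 ≤ i ≤ n` (conventions `x_1 = x_{2n} = 1`). -/
def gam (n : ℕ) (x : ℕ → ℂ) (i : ℕ) : ℂ :=
  if i = 1 then x (n + 1) ^ 2 / (x 2 * x (n + 2))
  else if i = n then x n ^ 2 / (x (n - 1) * x (2 * n - 1))
  else x i ^ 2 * x (n + i) ^ 2 / (x (i - 1) * x (i + 1) * x (n + i - 1) * x (n + i + 1))

/-- `γ_1(e_0^c(x)) = c⁻¹·γ_1(x)`, `γ_n(e_0^c(x)) = c⁻¹·γ_n(x)`, and
`γ_i(e_0^c(x)) = γ_i(x)` for `2 ≤ i ≤ n-1`. -/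
theorem stmt7 (n : ℕ) (hn : 2 ≤ n) (c : ℂ) (hc : c ≠ 0) (x : ℕ → ℂ)
    (hx : ∀ k, 2 ≤ k → k ≤ 2 * n - 1 → x k ≠ 0)
    (hx1 : x 1 = 1) (hx2n : x (2 * n) = 1)
    (hS : Sf n x n ≠ 0)
    (hden : ∀ k, 2 ≤ k → k ≤ n - 1 → c * Sf n x k + Tf n x k ≠ 0) :
    gam n (e0M n c x) 1 = c⁻¹ * gam n x 1 ∧
    gam n (e0M n c x) n = c⁻¹ * gam n x n ∧
    ∀ i, 2 ≤ i → i ≤ n - 1 → gam n (e0M n c x) i = gam n x i := by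
  have hSf1 : Sf n x 1 = 0 := by
    rw [Sf, Finset.Icc_eq_empty (by omega), Finset.sum_empty]
  have hT1 : Tf n x 1 = Sf n x n := rfl
  have hTn : Tf n x n = 0 := by
    rw [Tf, Finset.Icc_eq_empty (by omega), Finset.sum_empty]
  have e1 : e0M n c x 1 = 1 := by
    rw [e0M, if_pos (by omega : 1 ≤ n - 1), hx1, hSf1, hT1]
    field_simp
    simp [hS]
  have en : e0M n c x n = x n / c := by
    rw [e0M, if_neg (by omega), if_pos (by omega)]
  have en1 : e0M n c x (n + 1) = x (n + 1) / c := by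
    rw [e0M, if_neg (by omega), if_pos (by omega)]
  have e2n : e0M n c x (2 * n) = 1 := by
    rw [e0M, if_neg (by omega), if_neg (by omega),
      (by omega : 2 * n - n = n), hTn, hx2n]
    field_simp
    ring
  have elow : ∀ k, 2 ≤ k → k ≤ n - 1 →
      e0M n c x k = x k * Sf n x n / (c * Sf n x k + Tf n x k) := by
    intro k h1 h2
    rw [e0M, if_pos h2]
  have ehigh : ∀ l, 2 ≤ l → l ≤ n - 1 →
      e0M n c x (n + l) = x (n + l) * (c * Sf n x l + Tf n x l) / (c * Sf n x n) := by
    intro l h1 h2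
    rw [e0M, if_neg (by omega), if_neg (by omega), (by omega : n + l - n = l)]
  have pair : ∀ m, 1 ≤ m → m ≤ n →
      e0M n c x m * e0M n c x (n + m) = x m * x (n + m) / c := by
    intro m h1 h2
    rcases (by omega : m = 1 ∨ m = n ∨ (2 ≤ m ∧ m ≤ n - 1)) with rfl | heq | ⟨ha, hb⟩
    · rw [e1, en1, hx1]; ring
    · rw [heq, (by omega : n + n = 2 * n), en, e2n, hx2n]; ring
    · rw [elow m ha hb, ehigh m ha hb]
      have hDm := hden m ha hb
      field_simp
  refine ⟨?_, ?_, ?_⟩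
  · simp only [gam, if_pos rfl, ↓reduceIte]
    have h2 : e0M n c x 2 * e0M n c x (n + 2) = x 2 * x (n + 2) / c :=
      pair 2 (by omega) hn
    have hx2 : x 2 ≠ 0 := hx 2 le_rfl (by omega)
    have hxn1 : x (n + 1) ≠ 0 := hx (n + 1) (by omega) (by omega)
    have hxn2 : x (n + 2) ≠ 0 := by
      by_cases h : n = 2
      · rw [(by omega : n + 2 = 2 * n), hx2n]
        exact one_ne_zero
      · exact hx _ (by omega) (by omega)
    rw [en1, h2]
    field_simp
  · have hn1 : n ≠ 1 := by omega
    simp only [gam, if_neg hn1, if_pos rfl, ↓reduceIte]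
    have hp := pair (n - 1) (by omega) (by omega)
    rw [(by omega : n + (n - 1) = 2 * n - 1)] at hp
    have hxn : x n ≠ 0 := hx n hn (by omega)
    have hx2n1 : x (2 * n - 1) ≠ 0 := hx _ (by omega) (by omega)
    have hxn1 : x (n - 1) ≠ 0 := by
      by_cases h : n = 2
      · rw [(by omega : n - 1 = 1), hx1]
        exact one_ne_zero
      · exact hx _ (by omega) (by omega)
    rw [en, hp]
    field_simp
  · intro i h1 h2
    have hi1 : i ≠ 1 := by omega
    have hin : i ≠ n := by omega
    simp only [gam, if_neg hi1, if_neg hin]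
    rw [(by omega : n + i - 1 = n + (i - 1)), (by omega : n + i + 1 = n + (i + 1))]
    have hpi := pair i (by omega) (by omega)
    have hpm := pair (i - 1) (by omega) (by omega)
    have hpp := pair (i + 1) (by omega) (by omega)
    have hnum : e0M n c x i ^ 2 * e0M n c x (n + i) ^ 2 = (x i * x (n + i) / c) ^ 2 := by
      rw [← hpi]; ring
    have hden4 : e0M n c x (i - 1) * e0M n c x (i + 1) * e0M n c x (n + (i - 1)) *
        e0M n c x (n + (i + 1)) =
        (x (i - 1) * x (n + (i - 1)) / c) * (x (i + 1) * x (n + (i + 1)) / c) := by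
      rw [← hpm, ← hpp]; ring
    rw [hnum, hden4]
    have hxim : x (i - 1) ≠ 0 := by
      by_cases h : i = 2
      · rw [(by omega : i - 1 = 1), hx1]
        exact one_ne_zero
      · exact hx _ (by omega) (by omega)
    have hxip : x (i + 1) ≠ 0 := hx _ (by omega) (by omega)
    have hxnim : x (n + (i - 1)) ≠ 0 := hx _ (by omega) (by omega)
    have hxnip : x (n + (i + 1)) ≠ 0 := by
      by_cases h : i = n - 1
      · rw [(by omega : n + (i + 1) = 2 * n), hx2n]
        exact one_ne_zero
      · exact hx _ (by omega) (by omega)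
    field_simp
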